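/- Every (max,+)-isomorphism J from F onto G, where F (resp. G) is the set of lower semicontinuous functions from a Hausdorff topological space Y (resp. X) to [-∞,∞], is of the form Jf(x) = g(x) + f(φ(x)) where g : X → ℝ is continuous and φ : X → Y is a homeomorphism. -/

import Mathlib

open Classical in
noncomputable def peakFn {Y : Type*} (y : Y) (c : EReal) : Y → EReal :=
  fun z => if z = y then c else ⊤

section PeakLemmas
variable {Y : Type*}

lemma peakFn_self (y : Y) (c : EReal) : peakFn y c y = c := if_pos rfl

lemma peakFn_ne {y z : Y} (h : z ≠ y) (c : EReal) : peakFn y c z = ⊤ := if_neg h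

lemma le_peakFn_iff {f : Y → EReal} {y : Y} {c : EReal} : f ≤ peakFn y c ↔ f y ≤ c := by
  constructor
  · intro h
    have := h y
    rwa [peakFn_self] at this
  · intro h z
    by_cases hz : z = y
    · subst hz; rwa [peakFn_self]
    · rw [peakFn_ne hz]; exact le_top

lemma peakFn_add (y : Y) (c : EReal) (l : ℝ) :
    (fun z => peakFn y c z + (l : EReal)) = peakFn y (c + l) := by
  funext z
  by_cases hz : z = y
  · subst hz; rw [peakFn_self, peakFn_self]
  · rw [peakFn_ne hz, peakFn_ne hz, EReal.top_add_coe]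

lemma peakFn_inj {y y' : Y} {r r' : ℝ}
    (h : peakFn y (r : EReal) = peakFn y' (r' : EReal)) : y = y' ∧ r = r' := by
  have h1 := congrFun h y
  rw [peakFn_self] at h1
  by_cases hy : y = y'
  · subst hy
    rw [peakFn_self] at h1
    exact ⟨rfl, by exact_mod_cast h1⟩
  · rw [peakFn_ne hy] at h1
    exact absurd h1 (EReal.coe_ne_top r)

variable [TopologicalSpace Y]

lemma lsc_peakFn [T1Space Y] (y : Y) (c : EReal) :
    LowerSemicontinuous (peakFn y c) := by
  intro z t ht
  by_cases hz : z = y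
  · rw [hz, peakFn_self] at ht
    refine Filter.Eventually.of_forall fun w => lt_of_lt_of_le ht ?_
    by_cases hw : w = y
    · rw [hw, peakFn_self]
    · rw [peakFn_ne hw]; exact le_top
  · filter_upwards [isOpen_compl_singleton.mem_nhds (by simpa using hz)] with w hw
    rw [peakFn_ne (by simpa using hw)]
    rw [peakFn_ne hz] at ht
    exact ht

open Classical in
noncomputable def indFn {Z : Type*} (U : Set Z) : Z → EReal := fun z => if z ∈ U then ⊤ else ⊥

lemma indFn_mem {Z : Type*} {U : Set Z} {z : Z} (h : z ∈ U) : indFn U z = ⊤ := if_pos h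
lemma indFn_not_mem {Z : Type*} {U : Set Z} {z : Z} (h : z ∉ U) : indFn U z = ⊥ := if_neg h

lemma lsc_indicator {U : Set Y} (hU : IsOpen U) :
    LowerSemicontinuous (indFn U) := by
  intro z t ht
  by_cases hz : z ∈ U
  · filter_upwards [hU.mem_nhds hz] with w hw
    rw [indFn_mem hw]
    rwa [indFn_mem hz] at ht
  · rw [indFn_not_mem hz] at ht
    exact absurd ht (not_lt_bot)

lemma lsc_sup {f g : Y → EReal} (hf : LowerSemicontinuous f)
    (hg : LowerSemicontinuous g) : LowerSemicontinuous (f ⊔ g) := by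
  intro z t ht
  rw [Pi.sup_apply, gt_iff_lt, lt_sup_iff] at ht
  rcases ht with h | h
  · filter_upwards [hf z t h] with w hw
    exact (show t < f w from hw).trans_le (by rw [Pi.sup_apply]; exact le_sup_left)
  · filter_upwards [hg z t h] with w hw
    exact (show t < g w from hw).trans_le (by rw [Pi.sup_apply]; exact le_sup_right)

lemma EReal.add_coe_cancel (a : EReal) (l : ℝ) : a + (l : EReal) + ((-l : ℝ) : EReal) = a := by
  rw [EReal.coe_neg, ← sub_eq_add_neg, EReal.add_sub_cancel_right]

lemma lsc_add_const {f : Y → EReal} (hf : LowerSemicontinuous f) (l : ℝ) :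
    LowerSemicontinuous (fun z => f z + (l : EReal)) := by
  intro z t ht
  have h1 : t + ((-l : ℝ) : EReal) < f z := by
    have := EReal.add_lt_add_right_coe ht (-l)
    rwa [EReal.add_coe_cancel] at this
  filter_upwards [hf z _ h1] with w hw
  have := EReal.add_lt_add_right_coe hw l
  rwa [show t + ((-l : ℝ) : EReal) + (l : EReal) = t by
    simpa using EReal.add_coe_cancel t (-l)] at this

end PeakLemmas

lemma eval_helper {u v : EReal} {c : ℝ}
    (h : ∀ t : ℝ, u ≤ (t : EReal) ↔ v ≤ (c : EReal) + t) : v = u + (c : EReal) := by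
  induction u with
  | bot =>
    rw [EReal.bot_add]
    have hv : ∀ t : ℝ, v ≤ ((c + t : ℝ) : EReal) := fun t => by
      simpa [EReal.coe_add] using (h t).mp bot_le
    induction v with
    | bot => rfl
    | coe s =>
      have := hv (s - c - 1)
      rw [EReal.coe_le_coe_iff] at this
      linarith
    | top =>
      exact absurd (hv 0) (by simp)
  | coe r =>
    have h1 : v ≤ ((c + r : ℝ) : EReal) := by
      simpa [EReal.coe_add] using (h r).mp le_rfl
    have h2 : ∀ t : ℝ, t < r → ((c + t : ℝ) : EReal) < v := by
      intro t htr
      have : ¬ v ≤ (c : EReal) + t := fun hc => absurd ((h t).mpr hc)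
        (by rw [EReal.coe_le_coe_iff]; linarith)
      rw [EReal.coe_add]
      exact not_le.mp this
    rw [show (r : EReal) + (c : EReal) = ((r + c : ℝ) : EReal) by norm_cast]
    induction v with
    | bot => exact absurd (h2 (r - 1) (by linarith)) (not_lt_bot)
    | coe s =>
      rw [EReal.coe_le_coe_iff] at h1
      rw [EReal.coe_eq_coe_iff]
      by_contra hne
      have hs : s < c + r := lt_of_le_of_ne h1 (fun e => hne (by linarith))
      have := h2 (s - c) (by linarith)
      rw [EReal.coe_lt_coe_iff] at this
      linarith
    | top => exact absurd (top_le_iff.mp h1) (EReal.coe_ne_top _)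
  | top =>
    rw [EReal.top_add_coe]
    have h2 : ∀ t : ℝ, ¬ v ≤ (c : EReal) + t := by
      intro t hc
      exact absurd ((h t).mpr hc) (by simp)
    induction v with
    | bot => exact absurd bot_le (h2 0)
    | coe s =>
      refine absurd ?_ (h2 (s - c))
      rw [← EReal.coe_add, EReal.coe_le_coe_iff]
      linarith
    | top => rfl

/-- `J` is a (max,+)-isomorphism from `F` onto `G` with inverse `J'`. -/
def MaxPlusIso {X Y : Type*} (F : Set (Y → EReal)) (G : Set (X → EReal))
    (J : (Y → EReal) → (X → EReal)) (J' : (X → EReal) → (Y → EReal)) : Prop :=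
  (∀ f ∈ F, J f ∈ G) ∧ (∀ h ∈ G, J' h ∈ F) ∧
  (∀ f ∈ F, J' (J f) = f) ∧ (∀ h ∈ G, J (J' h) = h) ∧
  (∀ f ∈ F, ∀ f' ∈ F, J (f ⊔ f') = J f ⊔ J f') ∧
  (∀ f ∈ F, ∀ l : ℝ, J (fun y => f y + (l : EReal)) = fun x => J f x + (l : EReal))

section Main
variable {X Y : Type*} [TopologicalSpace X] [TopologicalSpace Y]

lemma maxPlusIso_symm {J : (Y → EReal) → (X → EReal)} {J' : (X → EReal) → (Y → EReal)}
    (hJ : MaxPlusIso {f : Y → EReal | LowerSemicontinuous f}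
      {g : X → EReal | LowerSemicontinuous g} J J') :
    MaxPlusIso {g : X → EReal | LowerSemicontinuous g}
      {f : Y → EReal | LowerSemicontinuous f} J' J := by
  obtain ⟨hJF, hJ'G, hJ'J, hJJ', hsup, htr⟩ := hJ
  refine ⟨hJ'G, hJF, hJJ', hJ'J, ?_, ?_⟩
  · intro h hh h' hh'
    have m1 : LowerSemicontinuous (J' h) := hJ'G h hh
    have m2 : LowerSemicontinuous (J' h') := hJ'G h' hh'
    have key : J (J' h ⊔ J' h') = h ⊔ h' := by
      rw [hsup _ m1 _ m2, hJJ' h hh, hJJ' h' hh']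
    calc J' (h ⊔ h') = J' (J (J' h ⊔ J' h')) := by rw [key]
      _ = J' h ⊔ J' h' := hJ'J _ (lsc_sup m1 m2)
  · intro h hh l
    have m1 : LowerSemicontinuous (J' h) := hJ'G h hh
    have key : J (fun y => J' h y + (l : EReal)) = fun x => h x + (l : EReal) := by
      rw [htr _ m1 l, hJJ' h hh]
    calc J' (fun x => h x + (l : EReal)) = J' (J (fun y => J' h y + (l : EReal))) := by rw [key]
      _ = fun y => J' h y + (l : EReal) := hJ'J _ (lsc_add_const m1 l)

omit [TopologicalSpace Y] in
lemma peakFn_chain {y : Y} {f₁ f₂ : Y → EReal}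
    (h1 : peakFn y (0 : EReal) ≤ f₁) (h2 : peakFn y (0 : EReal) ≤ f₂) :
    f₁ ≤ f₂ ∨ f₂ ≤ f₁ := by
  have e1 : ∀ z, z ≠ y → f₁ z = ⊤ := fun z hz =>
    top_le_iff.mp (by rw [← peakFn_ne hz (0 : EReal)]; exact h1 z)
  have e2 : ∀ z, z ≠ y → f₂ z = ⊤ := fun z hz =>
    top_le_iff.mp (by rw [← peakFn_ne hz (0 : EReal)]; exact h2 z)
  rcases le_total (f₁ y) (f₂ y) with h | h
  · left
    intro z
    by_cases hz : z = y
    · rw [hz]; exact h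
    · rw [e2 z hz]; exact le_top
  · right
    intro z
    by_cases hz : z = y
    · rw [hz]; exact h
    · rw [e1 z hz]; exact le_top

lemma peak_rep [T1Space X] [T1Space Y]
    (J : (Y → EReal) → (X → EReal)) (J' : (X → EReal) → (Y → EReal))
    (hJ : MaxPlusIso {f : Y → EReal | LowerSemicontinuous f}
      {g : X → EReal | LowerSemicontinuous g} J J') :
    ∃ (ψ : Y → X) (a : Y → ℝ),
      (∀ y, J (peakFn y 0) = peakFn (ψ y) (a y)) ∧
      (∀ f, LowerSemicontinuous f → ∀ y, J f (ψ y) = f y + (a y : EReal)) := by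
  obtain ⟨hJF, hJ'G, hJ'J, hJJ', hsup, htr⟩ := hJ
  -- monotonicity both ways
  have hmono : ∀ f, LowerSemicontinuous f → ∀ f', LowerSemicontinuous f' →
      (f ≤ f' ↔ J f ≤ J f') := by
    intro f hf f' hf'
    constructor
    · intro h
      have e : f ⊔ f' = f' := sup_eq_right.mpr h
      have h2 := hsup f hf f' hf'
      rw [e] at h2
      rw [h2]
      exact le_sup_left
    · intro h
      have e : J f ⊔ J f' = J f' := sup_eq_right.mpr h
      rw [← hsup f hf f' hf'] at e
      have e2 := congrArg J' e
      rw [hJ'J _ (lsc_sup hf hf'), hJ'J _ hf'] at e2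
      exact sup_eq_right.mp e2
  have hmono' : ∀ h, LowerSemicontinuous h → ∀ h', LowerSemicontinuous h' →
      (h ≤ h' ↔ J' h ≤ J' h') := by
    intro h hh h' hh'
    have := hmono _ (hJ'G _ hh) _ (hJ'G _ hh')
    rwa [hJJ' _ hh, hJJ' _ hh', iff_comm] at this
  have hinj : ∀ f, LowerSemicontinuous f → ∀ f', LowerSemicontinuous f' →
      J f = J f' → f = f' := by
    intro f hf f' hf' h
    have := congrArg J' h
    rwa [hJ'J _ hf, hJ'J _ hf'] at this
  -- the existence of a peak representation for each y
  have H : ∀ y : Y, ∃ (x : X) (r : ℝ), J (peakFn y 0) = peakFn x (r : EReal) := by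
    intro y
    have hpk : LowerSemicontinuous (peakFn y (0 : EReal)) := lsc_peakFn y 0
    have hJpk : LowerSemicontinuous (J (peakFn y 0)) := hJF _ hpk
    -- J pk is not ⊤ somewhere
    have hx : ∃ x, J (peakFn y 0) x ≠ ⊤ := by
      by_contra hc
      push_neg at hc
      -- then J pk = J ⊤, contradicting injectivity
      have hT : LowerSemicontinuous (fun _ : Y => (⊤ : EReal)) := lowerSemicontinuous_const
      have hT' : LowerSemicontinuous (fun _ : X => (⊤ : EReal)) := lowerSemicontinuous_const
      have htop : J (fun _ => (⊤ : EReal)) = fun _ => (⊤ : EReal) := by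
        have h1 : (fun _ : X => (⊤ : EReal)) ≤ J (fun _ => (⊤ : EReal)) := by
          have := (hmono _ (hJ'G _ hT') _ hT).mp (fun y => le_top)
          rwa [hJJ' _ hT'] at this
        exact le_antisymm (fun x => le_top) h1
      have e : J (peakFn y 0) = J (fun _ => (⊤ : EReal)) := by
        rw [htop]; exact funext hc
      have := congrFun (hinj _ hpk _ hT e) y
      rw [peakFn_self] at this
      exact absurd this (by simp)
    obtain ⟨x, hxne⟩ := hx
    -- J pk equals the peak at x
    have hpeak : J (peakFn y 0) = peakFn x (J (peakFn y 0) x) := by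
      funext z
      by_cases hz : z = x
      · rw [hz, peakFn_self]
      · rw [peakFn_ne hz]
        by_contra hzt
        have hf1 : LowerSemicontinuous (peakFn x (J (peakFn y 0) x)) := lsc_peakFn _ _
        have hf2 : LowerSemicontinuous (peakFn z (J (peakFn y 0) z)) := lsc_peakFn _ _
        have h1 : J (peakFn y 0) ≤ peakFn x (J (peakFn y 0) x) := le_peakFn_iff.mpr le_rfl
        have h2 : J (peakFn y 0) ≤ peakFn z (J (peakFn y 0) z) := le_peakFn_iff.mpr le_rfl
        have hb1 : peakFn y 0 ≤ J' (peakFn x (J (peakFn y 0) x)) := by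
          have := (hmono' _ hJpk _ hf1).mp h1
          rwa [hJ'J _ hpk] at this
        have hb2 : peakFn y 0 ≤ J' (peakFn z (J (peakFn y 0) z)) := by
          have := (hmono' _ hJpk _ hf2).mp h2
          rwa [hJ'J _ hpk] at this
        rcases peakFn_chain hb1 hb2 with hc | hc
        · have := (hmono' _ hf1 _ hf2).mpr hc
          have hzx := le_peakFn_iff.mp this
          rw [peakFn_ne (Ne.symm (Ne.symm hz)) (J (peakFn y 0) x)] at hzx
          exact hzt (top_le_iff.mp hzx)
        · have := (hmono' _ hf2 _ hf1).mpr hc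
          have hxz : peakFn z (J (peakFn y 0) z) x ≤ J (peakFn y 0) x := by
            have := this x
            rwa [peakFn_self] at this
          rw [peakFn_ne (fun e => hz e.symm) (J (peakFn y 0) z)] at hxz
          exact hxne (top_le_iff.mp hxz)
    set b := J (peakFn y 0) x with hb
    -- b is not ⊥
    have hbne : b ≠ ⊥ := by
      intro hbb
      have hpk1 : LowerSemicontinuous (peakFn y ((1 : ℝ) : EReal)) := lsc_peakFn _ _
      have hpk : LowerSemicontinuous (peakFn y (0 : EReal)) := lsc_peakFn y 0
      have e1 : J (peakFn y ((1 : ℝ) : EReal)) = J (peakFn y 0) := by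
        have h1 := htr _ hpk 1
        rw [peakFn_add y (0 : EReal) 1, zero_add] at h1
        rw [h1, hpeak]
        rw [show (fun x' => peakFn x b x' + ((1 : ℝ) : EReal)) = peakFn x (b + (1 : ℝ)) from
          peakFn_add x b 1, hbb, EReal.bot_add, ← hbb, ← hpeak]
      have := congrFun (hinj _ hpk1 _ hpk e1) y
      rw [peakFn_self, peakFn_self] at this
      exact absurd this (by norm_num)
    lift b to ℝ using ⟨hxne, hbne⟩ with r hr
    exact ⟨x, r, hpeak⟩
  choose ψ a hψ using H
  refine ⟨ψ, a, hψ, ?_⟩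
  intro f hf y
  have hpk : LowerSemicontinuous (peakFn y (0 : EReal)) := lsc_peakFn y 0
  refine eval_helper (fun t => ?_)
  have hpkt : LowerSemicontinuous (peakFn y ((t : ℝ) : EReal)) := lsc_peakFn _ _
  have hJpkt : J (peakFn y ((t : ℝ) : EReal)) = peakFn (ψ y) ((a y : EReal) + t) := by
    have h1 := htr _ hpk t
    rw [peakFn_add y (0 : EReal) t, zero_add] at h1
    rw [h1, hψ y, peakFn_add]
  calc f y ≤ (t : EReal) ↔ f ≤ peakFn y ((t : ℝ) : EReal) := le_peakFn_iff.symm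
    _ ↔ J f ≤ J (peakFn y ((t : ℝ) : EReal)) := hmono f hf _ hpkt
    _ ↔ J f ≤ peakFn (ψ y) ((a y : EReal) + t) := by rw [hJpkt]
    _ ↔ J f (ψ y) ≤ (a y : EReal) + t := le_peakFn_iff

end Main

theorem stmt10 {X Y : Type*} [TopologicalSpace X] [TopologicalSpace Y]
    [T2Space X] [T2Space Y]
    (J : (Y → EReal) → (X → EReal)) (J' : (X → EReal) → (Y → EReal))
    (hJ : MaxPlusIso {f : Y → EReal | LowerSemicontinuous f}
      {g : X → EReal | LowerSemicontinuous g} J J') :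
    ∃ (g : X → ℝ) (φ : X ≃ₜ Y), Continuous g ∧
      ∀ f : Y → EReal, LowerSemicontinuous f →
        ∀ x, J f x = (g x : EReal) + f (φ x) := by
  have hJsymm := maxPlusIso_symm hJ
  obtain ⟨ψ, a, hψpk, hψ⟩ := peak_rep J J' hJ
  obtain ⟨ψ', a', hψ'pk, hψ'⟩ := peak_rep J' J hJsymm
  obtain ⟨hJ'G2, hJF2, hJJ'2, hJ'J2, hsup', htr'⟩ := hJsymm
  obtain ⟨hJF, hJ'G, hJ'J, hJJ', hsup, htr⟩ := hJ
  -- the two composition relations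
  have hrel : ∀ y : Y, ψ' (ψ y) = y ∧ a' (ψ y) + a y = 0 := by
    intro y
    have hpk : LowerSemicontinuous (peakFn y (0 : EReal)) := lsc_peakFn y 0
    have h0 := hJ'J _ hpk
    rw [hψpk y] at h0
    -- compute J' (peakFn (ψ y) (a y))
    have hpk' : LowerSemicontinuous (peakFn (ψ y) (0 : EReal)) := lsc_peakFn _ _
    have h1 : J' (peakFn (ψ y) ((a y : ℝ) : EReal)) =
        peakFn (ψ' (ψ y)) ((a' (ψ y) + a y : ℝ) : EReal) := by
      have h2 := htr' _ hpk' (a y)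
      rw [peakFn_add (ψ y) (0 : EReal) (a y), zero_add] at h2
      rw [h2, hψ'pk (ψ y), peakFn_add]
      norm_cast
    rw [h1] at h0
    have h0' : peakFn (ψ' (ψ y)) ((a' (ψ y) + a y : ℝ) : EReal) =
        peakFn y (((0 : ℝ) : ℝ) : EReal) := by
      rw [EReal.coe_zero]; exact h0
    have := peakFn_inj h0'
    exact ⟨this.1, by linarith [this.2]⟩
  have hrel' : ∀ x : X, ψ (ψ' x) = x ∧ a (ψ' x) + a' x = 0 := by
    intro x
    have hpk : LowerSemicontinuous (peakFn x (0 : EReal)) := lsc_peakFn x 0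
    have h0 := hJJ' _ hpk
    rw [hψ'pk x] at h0
    have hpk' : LowerSemicontinuous (peakFn (ψ' x) (0 : EReal)) := lsc_peakFn _ _
    have h1 : J (peakFn (ψ' x) ((a' x : ℝ) : EReal)) =
        peakFn (ψ (ψ' x)) ((a (ψ' x) + a' x : ℝ) : EReal) := by
      have h2 := htr _ hpk' (a' x)
      rw [peakFn_add (ψ' x) (0 : EReal) (a' x), zero_add] at h2
      rw [h2, hψpk (ψ' x), peakFn_add]
      norm_cast
    rw [h1] at h0
    have h0' : peakFn (ψ (ψ' x)) ((a (ψ' x) + a' x : ℝ) : EReal) =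
        peakFn x (((0 : ℝ) : ℝ) : EReal) := by
      rw [EReal.coe_zero]; exact h0
    have := peakFn_inj h0'
    exact ⟨this.1, by linarith [this.2]⟩
  -- continuity of ψ'
  have hcontψ' : Continuous ψ' := by
    rw [continuous_def]
    intro U hU
    have hind : LowerSemicontinuous (indFn U) := lsc_indicator hU
    have hset : ψ' ⁻¹' U = (J (indFn U)) ⁻¹' (Set.Ioi (0 : EReal)) := by
      ext x
      have hx : ψ (ψ' x) = x := (hrel' x).1
      have heval := hψ (indFn U) hind (ψ' x)
      rw [hx] at heval
      simp only [Set.mem_preimage, Set.mem_Ioi]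
      constructor
      · intro hm
        rw [heval, indFn_mem hm, EReal.top_add_coe]
        exact lt_of_le_of_lt le_rfl (by simp)
      · intro h0
        by_contra hm
        rw [heval, indFn_not_mem hm, EReal.bot_add] at h0
        exact not_lt_bot h0
    rw [hset]
    exact (hJF _ hind).isOpen_preimage 0
  -- continuity of ψ
  have hcontψ : Continuous ψ := by
    rw [continuous_def]
    intro U hU
    have hind : LowerSemicontinuous (indFn U) := lsc_indicator hU
    have hset : ψ ⁻¹' U = (J' (indFn U)) ⁻¹' (Set.Ioi (0 : EReal)) := by
      ext y
      have hy : ψ' (ψ y) = y := (hrel y).1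
      have heval := hψ' (indFn U) hind (ψ y)
      rw [hy] at heval
      simp only [Set.mem_preimage, Set.mem_Ioi]
      constructor
      · intro hm
        rw [heval, indFn_mem hm, EReal.top_add_coe]
        exact lt_of_le_of_lt le_rfl (by simp)
      · intro h0
        by_contra hm
        rw [heval, indFn_not_mem hm, EReal.bot_add] at h0
        exact not_lt_bot h0
    rw [hset]
    exact (hJ'G _ hind).isOpen_preimage 0
  set g : X → ℝ := fun x => a (ψ' x) with hg
  -- the representation formula
  have hform : ∀ f : Y → EReal, LowerSemicontinuous f → ∀ x,
      J f x = (g x : EReal) + f (ψ' x) := by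
    intro f hf x
    have heval := hψ f hf (ψ' x)
    rw [(hrel' x).1] at heval
    rw [heval, add_comm]
  -- continuity of g
  have hg1 : LowerSemicontinuous (fun x => ((g x : ℝ) : EReal)) := by
    have h0 : LowerSemicontinuous (fun _ : Y => (0 : EReal)) := lowerSemicontinuous_const
    have e : (fun x => ((g x : ℝ) : EReal)) = J (fun _ => (0 : EReal)) := by
      funext x
      rw [hform _ h0 x, add_zero]
    rw [e]
    exact hJF _ h0
  have hg2 : LowerSemicontinuous (fun x => ((-(g x) : ℝ) : EReal)) := by
    have h0 : LowerSemicontinuous (fun _ : X => (0 : EReal)) := lowerSemicontinuous_const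
    have e : (fun x => ((-(g x) : ℝ) : EReal)) = (J' (fun _ => (0 : EReal))) ∘ ψ' := by
      funext x
      have h1 := hψ' (fun _ => (0 : EReal)) h0 x
      simp only [Function.comp]
      rw [h1, zero_add]
      norm_cast
      have := (hrel' x).2
      simp only [hg]
      linarith
    rw [e]
    exact (show LowerSemicontinuous (J' (fun _ => (0 : EReal))) from hJ'G _ h0).comp hcontψ'
  have hgc : Continuous g := by
    rw [continuous_iff_lower_upperSemicontinuous]
    constructor
    · rw [lowerSemicontinuous_iff_isOpen_preimage]
      intro t
      have := hg1.isOpen_preimage (t : EReal)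
      convert this using 1
      ext x
      simp [EReal.coe_lt_coe_iff]
    · rw [upperSemicontinuous_iff_isOpen_preimage]
      intro t
      have := hg2.isOpen_preimage ((-t : ℝ) : EReal)
      convert this using 1
      ext x
      simp [EReal.coe_lt_coe_iff]
  refine ⟨g, ⟨⟨ψ', ψ, fun x => (hrel' x).1, fun y => (hrel y).1⟩, hcontψ', hcontψ⟩, hgc, ?_⟩
  intro f hf x
  exact hform f hf x
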